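/- Let f : ℤ_p → ℤ_p be a 1-Lipschitz function that is both additive (f(x+y)=f(x)+f(y)) and a homomorphism with respect to coordinate-wise XOR (f(x XOR y) = f(x) XOR f(y)), and bijective. Then f is the identity map. -/

import Mathlib

/-- The `k`-th digit of the canonical `p`-adic expansion of `x`. -/
noncomputable def padicDigit (p : ℕ) [Fact p.Prime] (x : ℤ_[p]) (k : ℕ) : ℕ :=
  x.appr (k + 1) / p ^ k % p

/-- Coordinate-wise XOR (digit-wise addition mod p) on `ℤ_[p]`. -/
noncomputable def pXor (p : ℕ) [Fact p.Prime] (x y : ℤ_[p]) : ℤ_[p] :=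
  ∑' k : ℕ, (((padicDigit p x k + padicDigit p y k) % p : ℕ) : ℤ_[p]) * (p : ℤ_[p]) ^ k

open Finset

variable {p : ℕ} [hp : Fact p.Prime]

variable {p : ℕ} [hp : Fact p.Prime]

lemma aux_p_pos : 0 < p := hp.out.pos
lemma aux_one_lt_p : 1 < p := hp.out.one_lt

lemma aux_summable (c : ℕ → ℤ_[p]) : Summable (fun k => c k * (p:ℤ_[p])^k) := by
  apply Summable.of_norm_bounded (g := fun k => ((p:ℝ)⁻¹)^k)
  · apply summable_geometric_of_lt_one
    · positivity
    · rw [inv_lt_one_iff₀]; right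
      exact_mod_cast aux_one_lt_p
  · intro k
    calc ‖c k * (p:ℤ_[p])^k‖ ≤ ‖c k‖ * ‖(p:ℤ_[p])^k‖ := norm_mul_le _ _
    _ ≤ 1 * ((p:ℝ)⁻¹)^k := by
        apply mul_le_mul (PadicInt.norm_le_one _) _ (norm_nonneg _) zero_le_one
        rw [PadicInt.norm_p_pow]
        rw [zpow_neg, zpow_natCast, ← inv_pow]
    _ = ((p:ℝ)⁻¹)^k := one_mul _

lemma aux_appr_unique (x : ℤ_[p]) (n m : ℕ) (hm : m < p^n)
    (h : x - m ∈ Ideal.span {(p:ℤ_[p])^n}) : x.appr n = m := by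
  have h2 := PadicInt.appr_spec n x
  have h3 : ((m:ℤ_[p]) - x.appr n) ∈ Ideal.span {(p:ℤ_[p])^n} := by
    have := Submodule.sub_mem _ h2 h
    simpa using this
  have h4 : ‖(((m:ℤ) - (x.appr n : ℤ) : ℤ) : ℤ_[p])‖ ≤ (p:ℝ) ^ (-n : ℤ) := by
    rw [PadicInt.norm_le_pow_iff_mem_span_pow]
    push_cast
    exact h3
  rw [PadicInt.norm_int_le_pow_iff_dvd] at h4
  have h5 : ((m:ℤ) - x.appr n) = 0 := by
    refine Int.eq_zero_of_abs_lt_dvd h4 ?_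
    have h6 := PadicInt.appr_lt x n
    have h7 : ((p:ℤ))^n = ((p^n : ℕ) : ℤ) := by push_cast; ring
    rw [abs_lt]
    constructor <;> omega
  omega

lemma aux_appr_zero (x : ℤ_[p]) : x.appr 0 = 0 := by
  have := PadicInt.appr_lt x 0
  simpa using this

lemma aux_digit_lt (x : ℤ_[p]) (k : ℕ) : padicDigit p x k < p :=
  Nat.mod_lt _ aux_p_pos

lemma aux_appr_eq_sum (x : ℤ_[p]) (n : ℕ) :
    x.appr n = ∑ j ∈ range n, padicDigit p x j * p^j := by
  induction n with
  | zero => simpa using aux_appr_zero x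
  | succ n ih =>
    obtain ⟨e, he⟩ := PadicInt.dvd_appr_sub_appr x n (n+1) (show n ≤ n+1 by omega)
    have hmono := PadicInt.appr_mono x (show n ≤ n+1 by omega)
    have happr : x.appr (n+1) = x.appr n + p^n * e := by omega
    have hlt := PadicInt.appr_lt x (n+1)
    have hltn := PadicInt.appr_lt x n
    have he_lt : e < p := by
      by_contra hcon
      push_neg at hcon
      have : p^n * p ≤ p^n * e := Nat.mul_le_mul_left _ hcon
      rw [← pow_succ] at this
      omega
    have hdig : padicDigit p x n = e := by
      unfold padicDigit
      rw [happr, Nat.add_mul_div_left _ _ (pow_pos aux_p_pos n),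
        Nat.div_eq_of_lt hltn]
      simpa using Nat.mod_eq_of_lt he_lt
    rw [Finset.sum_range_succ, ← ih, hdig, happr]
    ring

lemma aux_expansion (x : ℤ_[p]) : x = ∑' k, (padicDigit p x k : ℤ_[p]) * (p:ℤ_[p])^k := by
  have hs := aux_summable (fun k => ((padicDigit p x k : ℤ_[p])))
  have h1 : Filter.Tendsto (fun n => ∑ j ∈ range n, (padicDigit p x j : ℤ_[p]) * (p:ℤ_[p])^j)
      Filter.atTop (nhds (∑' k, (padicDigit p x k : ℤ_[p]) * (p:ℤ_[p])^k)) :=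
    hs.hasSum.tendsto_sum_nat
  have h2 : Filter.Tendsto (fun n => ∑ j ∈ range n, (padicDigit p x j : ℤ_[p]) * (p:ℤ_[p])^j)
      Filter.atTop (nhds x) := by
    have heq : ∀ n, ∑ j ∈ range n, (padicDigit p x j : ℤ_[p]) * (p:ℤ_[p])^j
        = ((x.appr n : ℕ) : ℤ_[p]) := by
      intro n
      rw [aux_appr_eq_sum]
      push_cast
      rfl
    simp only [heq]
    rw [tendsto_iff_dist_tendsto_zero]
    apply squeeze_zero (fun n => dist_nonneg) (g := fun n => ((p:ℝ)⁻¹)^n)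
    · intro n
      rw [dist_eq_norm, ← norm_neg, neg_sub]
      have := PadicInt.appr_spec n x
      rw [← PadicInt.norm_le_pow_iff_mem_span_pow] at this
      rw [zpow_neg, zpow_natCast, ← inv_pow] at this
      exact this
    · apply tendsto_pow_atTop_nhds_zero_of_lt_one
      · positivity
      · rw [inv_lt_one_iff₀]; right; exact_mod_cast aux_one_lt_p
  exact (tendsto_nhds_unique h2 h1)

lemma aux_sum_lt (d : ℕ → ℕ) (hd : ∀ k, d k < p) (n : ℕ) :
    ∑ j ∈ range n, d j * p^j < p^n := by
  induction n with
  | zero => simp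
  | succ n ih =>
    rw [Finset.sum_range_succ]
    have h1 : d n * p^n ≤ (p-1) * p^n := Nat.mul_le_mul_right _ (by have := hd n; omega)
    have h3 : (p-1) * p^n + p^n = p^(n+1) := by
      have hp0 : 0 < p := aux_p_pos
      have hp1 : p - 1 + 1 = p := by omega
      calc (p-1)*p^n + p^n = (p-1+1) * p^n := by ring
      _ = p^(n+1) := by rw [hp1, pow_succ]; ring
    omega

lemma aux_digit_tsum (d : ℕ → ℕ) (hd : ∀ k, d k < p) (k : ℕ) :
    padicDigit p (∑' j, ((d j : ℕ) : ℤ_[p]) * (p:ℤ_[p])^j) k = d k := by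
  have hsum := aux_summable (fun j => ((d j : ℤ_[p])))
  have hsum2 := aux_summable (fun j => ((d (j + (k+1)) : ℤ_[p])))
  have happr : (∑' j, ((d j : ℕ) : ℤ_[p]) * (p:ℤ_[p])^j).appr (k+1)
      = ∑ j ∈ range (k+1), d j * p^j := by
    apply aux_appr_unique
    · exact aux_sum_lt d hd (k+1)
    · have hsplit := Summable.sum_add_tsum_nat_add (f := fun j => ((d j : ℤ_[p])) * (p:ℤ_[p])^j) (k+1) hsum
      have h8 : (∑' j, ((d j : ℕ) : ℤ_[p]) * (p:ℤ_[p])^j)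
            - ((∑ j ∈ range (k+1), d j * p^j : ℕ) : ℤ_[p]) =
          ∑' j, ((d (j + (k+1)) : ℤ_[p])) * (p:ℤ_[p])^(j + (k+1)) := by
        rw [← hsplit]
        push_cast
        ring
      rw [h8, Ideal.mem_span_singleton]
      refine ⟨∑' j, ((d (j + (k+1)) : ℤ_[p])) * (p:ℤ_[p])^j, ?_⟩
      rw [← Summable.tsum_mul_left _ hsum2]
      apply tsum_congr
      intro j
      rw [pow_add]
      ring
  unfold padicDigit
  rw [happr, Finset.sum_range_succ,
    Nat.add_mul_div_right _ _ (pow_pos aux_p_pos k),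
    Nat.div_eq_of_lt (aux_sum_lt d hd k)]
  simpa using Nat.mod_eq_of_lt (hd k)

lemma aux_single_as_tsum (m k : ℕ) :
    ((m:ℤ_[p]) * (p:ℤ_[p])^k) = ∑' j, (((if j = k then m else 0 : ℕ)) : ℤ_[p]) * (p:ℤ_[p])^j := by
  rw [tsum_eq_single k]
  · simp
  · intro b hb
    simp [hb]

lemma aux_digit_single (m k j : ℕ) (hm : m < p) :
    padicDigit p ((m:ℤ_[p]) * (p:ℤ_[p])^k) j = if j = k then m else 0 := by
  rw [aux_single_as_tsum]
  rw [aux_digit_tsum (fun j => if j = k then m else 0)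
    (fun j => by split <;> [exact hm; exact aux_p_pos]) j]

lemma aux_digit_natlt (a : ℕ) (ha : a < p) (j : ℕ) :
    padicDigit p ((a:ℕ) : ℤ_[p]) j = if j = 0 then a else 0 := by
  have := aux_digit_single a 0 j ha
  simpa using this

lemma aux_appr_p_mul (t : ℤ_[p]) (n : ℕ) : (((p:ℕ) : ℤ_[p]) * t).appr (n+1) = p * t.appr n := by
  apply aux_appr_unique
  · have := PadicInt.appr_lt t n
    calc p * t.appr n < p * p^n := by have hp0 : 0 < p := aux_p_pos; exact (Nat.mul_lt_mul_left hp0).mpr this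
    _ = p^(n+1) := (pow_succ' p n).symm
  · have h1 := PadicInt.appr_spec n t
    rw [Ideal.mem_span_singleton] at h1 ⊢
    obtain ⟨s, hs⟩ := h1
    refine ⟨s, ?_⟩
    push_cast
    rw [← mul_sub, hs, pow_succ']
    ring

lemma aux_digit_p_mul_zero (t : ℤ_[p]) : padicDigit p (((p:ℕ):ℤ_[p]) * t) 0 = 0 := by
  unfold padicDigit
  rw [aux_appr_p_mul t 0, aux_appr_zero]
  simp

lemma aux_digit_p_mul_succ (t : ℤ_[p]) (k : ℕ) :
    padicDigit p (((p:ℕ):ℤ_[p]) * t) (k+1) = padicDigit p t k := by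
  unfold padicDigit
  rw [aux_appr_p_mul t (k+1)]
  congr 1
  rw [pow_succ']
  rw [Nat.mul_div_mul_left _ _ aux_p_pos]

lemma aux_xor_single (a : ℕ) (ha : a < p) (t : ℤ_[p]) :
    pXor p ((a:ℕ) : ℤ_[p]) (((p:ℕ):ℤ_[p]) * t) = ((a:ℕ) : ℤ_[p]) + ((p:ℕ):ℤ_[p]) * t := by
  unfold pXor
  have hd : ∀ k, (((padicDigit p ((a:ℕ):ℤ_[p]) k + padicDigit p (((p:ℕ):ℤ_[p]) * t) k) % p : ℕ) : ℤ_[p])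
      = if k = 0 then ((a:ℕ):ℤ_[p]) else ((padicDigit p t (k-1) : ℕ) : ℤ_[p]) := by
    intro k
    cases k with
    | zero =>
      rw [aux_digit_natlt a ha 0, aux_digit_p_mul_zero]
      simp [Nat.mod_eq_of_lt ha]
    | succ k =>
      rw [aux_digit_natlt a ha (k+1), aux_digit_p_mul_succ]
      simp [Nat.mod_eq_of_lt (aux_digit_lt t k)]
  calc ∑' k, (((padicDigit p ((a:ℕ):ℤ_[p]) k + padicDigit p (((p:ℕ):ℤ_[p]) * t) k) % p : ℕ) : ℤ_[p]) * (p:ℤ_[p])^k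
      = ∑' k, (if k = 0 then ((a:ℕ):ℤ_[p]) else ((padicDigit p t (k-1) : ℕ) : ℤ_[p])) * (p:ℤ_[p])^k := by
        apply tsum_congr; intro k; rw [hd k]
    _ = ((a:ℕ):ℤ_[p]) + ((p:ℕ):ℤ_[p]) * t := by
        have hsum : Summable (fun k => (if k = 0 then ((a:ℕ):ℤ_[p]) else ((padicDigit p t (k-1) : ℕ) : ℤ_[p])) * (p:ℤ_[p])^k) :=
          aux_summable _
        rw [Summable.tsum_eq_zero_add hsum]
        simp only [if_pos rfl, pow_zero, mul_one]
        congr 1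
        have hsum2 : Summable (fun k => ((padicDigit p t k : ℕ) : ℤ_[p]) * (p:ℤ_[p])^k) :=
          aux_summable _
        calc ∑' k, (if k + 1 = 0 then ((a:ℕ):ℤ_[p]) else ((padicDigit p t (k+1-1) : ℕ) : ℤ_[p])) * (p:ℤ_[p])^(k+1)
            = ∑' k, ((p:ℕ):ℤ_[p]) * (((padicDigit p t k : ℕ) : ℤ_[p]) * (p:ℤ_[p])^k) := by
              apply tsum_congr; intro k
              simp only [Nat.succ_ne_zero, if_false, Nat.add_sub_cancel]
              rw [pow_succ']
              ring
          _ = ((p:ℕ):ℤ_[p]) * ∑' k, ((padicDigit p t k : ℕ) : ℤ_[p]) * (p:ℤ_[p])^k :=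
              Summable.tsum_mul_left _ hsum2
          _ = ((p:ℕ):ℤ_[p]) * t := by rw [← aux_expansion]

lemma aux_xor_kill (w : ℤ_[p]) (k : ℕ) (h : padicDigit p w k ≠ 0) :
    pXor p w ((((p - padicDigit p w k : ℕ)):ℤ_[p]) * (p:ℤ_[p])^k)
      = w - ((padicDigit p w k : ℕ) : ℤ_[p]) * (p:ℤ_[p])^k := by
  have hwk := aux_digit_lt w k
  have hm : p - padicDigit p w k < p := by omega
  unfold pXor
  have hd : ∀ j, (((padicDigit p w j + padicDigit p ((((p - padicDigit p w k : ℕ)):ℤ_[p]) * (p:ℤ_[p])^k) j) % p : ℕ) : ℤ_[p])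
      = if j = k then 0 else ((padicDigit p w j : ℕ) : ℤ_[p]) := by
    intro j
    rw [aux_digit_single _ k j hm]
    by_cases hj : j = k
    · subst hj
      have h1 : padicDigit p w j + (p - padicDigit p w j) = p := by omega
      simp [h1]
    · simp only [if_neg hj]
      rw [Nat.add_zero, Nat.mod_eq_of_lt (aux_digit_lt w j)]
  calc ∑' j, (((padicDigit p w j + padicDigit p ((((p - padicDigit p w k : ℕ)):ℤ_[p]) * (p:ℤ_[p])^k) j) % p : ℕ) : ℤ_[p]) * (p:ℤ_[p])^j
      = ∑' j, (if j = k then 0 else ((padicDigit p w j : ℕ) : ℤ_[p]) * (p:ℤ_[p])^j) := by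
        apply tsum_congr; intro j
        rw [hd j]
        split <;> simp
    _ = w - ((padicDigit p w k : ℕ) : ℤ_[p]) * (p:ℤ_[p])^k := by
        have hsum : Summable (fun j => ((padicDigit p w j : ℕ) : ℤ_[p]) * (p:ℤ_[p])^j) :=
          aux_summable _
        have := Summable.tsum_eq_add_tsum_ite hsum k
        rw [← aux_expansion w] at this
        rw [eq_sub_iff_add_eq, add_comm, ← this]

lemma aux_eq_digit_zero (w : ℤ_[p]) (h : ∀ k, padicDigit p w (k+1) = 0) :
    w = ((padicDigit p w 0 : ℕ) : ℤ_[p]) := by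
  conv_lhs => rw [aux_expansion w]
  rw [tsum_eq_single 0]
  · simp
  · intro b hb
    obtain ⟨k, rfl⟩ := Nat.exists_eq_succ_of_ne_zero hb
    rw [h k]
    simp

theorem stmt_13 (p : ℕ) [Fact p.Prime] (f : ℤ_[p] → ℤ_[p])
    (hlip : ∀ x y : ℤ_[p], ‖f x - f y‖ ≤ ‖x - y‖)
    (hadd : ∀ x y : ℤ_[p], f (x + y) = f x + f y)
    (hxor : ∀ x y : ℤ_[p], f (pXor p x y) = pXor p (f x) (f y))
    (hbij : Function.Bijective f) :
    ∀ x : ℤ_[p], f x = x := by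
  have hp2 : 1 < p := (Fact.out : p.Prime).one_lt
  have hf0 : f 0 = 0 := by have := hadd 0 0; simpa using this
  have hnat : ∀ n : ℕ, f n = f 1 * n := by
    intro n
    induction n with
    | zero => simpa using hf0
    | succ n ih =>
      push_cast
      rw [hadd, ih]
      ring
  have hcont : Continuous f := by
    have : LipschitzWith 1 f := by
      apply LipschitzWith.of_dist_le_mul
      intro x y
      simpa [dist_eq_norm] using hlip x y
    exact this.continuous
  have hc : ∀ x, f x = f 1 * x := by
    have hg : Continuous (fun x : ℤ_[p] => f 1 * x) := continuous_const.mul continuous_id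
    have hdense : Dense (Set.range (Nat.cast : ℕ → ℤ_[p])) :=
      PadicInt.denseRange_natCast
    have heq := Continuous.ext_on hdense hcont hg ?_
    · exact fun x => congrFun heq x
    · rintro _ ⟨n, rfl⟩
      exact hnat n
  set c := f 1 with hcdef
  obtain ⟨u, hu⟩ := hbij.2 1
  rw [hc u] at hu
  -- the key identity
  have hkey : ∀ (a : ℕ), a < p → ∀ z : ℤ_[p],
      c * ((a:ℕ) : ℤ_[p]) + ((p:ℕ):ℤ_[p]) * z
        = pXor p (c * ((a:ℕ) : ℤ_[p])) (((p:ℕ):ℤ_[p]) * z) := by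
    intro a ha z
    have h1 := hxor ((a:ℕ) : ℤ_[p]) (((p:ℕ):ℤ_[p]) * (u * z))
    rw [aux_xor_single a ha (u * z)] at h1
    rw [hadd, hc ((a:ℕ) : ℤ_[p]), hc (((p:ℕ):ℤ_[p]) * (u * z))] at h1
    have h2 : c * (((p:ℕ):ℤ_[p]) * (u * z)) = ((p:ℕ):ℤ_[p]) * z := by
      have h3 : c * (((p:ℕ):ℤ_[p]) * (u * z)) = (c * u) * (((p:ℕ):ℤ_[p]) * z) := by ring
      rw [h3, hu, one_mul]
    rw [h2] at h1
    exact h1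
  -- all higher digits of c * a vanish
  have hdig : ∀ (a : ℕ), a < p → ∀ k : ℕ,
      padicDigit p (c * ((a:ℕ) : ℤ_[p])) (k+1) = 0 := by
    intro a ha k
    by_contra hne
    set w := c * ((a:ℕ) : ℤ_[p]) with hw
    set m := p - padicDigit p w (k+1) with hmdef
    have hwk := aux_digit_lt w (k+1)
    have hm : m < p := by omega
    have hz := hkey a ha (((m:ℕ) : ℤ_[p]) * ((p:ℕ):ℤ_[p])^k)
    have hpz : ((p:ℕ):ℤ_[p]) * (((m:ℕ) : ℤ_[p]) * ((p:ℕ):ℤ_[p])^k)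
        = ((m:ℕ) : ℤ_[p]) * ((p:ℕ):ℤ_[p])^(k+1) := by
      rw [pow_succ]
      ring
    rw [hpz] at hz
    rw [aux_xor_kill w (k+1) hne] at hz
    have hfinal : (((m + padicDigit p w (k+1) : ℕ)) : ℤ_[p]) * ((p:ℕ):ℤ_[p])^(k+1) = 0 := by
      push_cast
      linear_combination hz
    have hmp : m + padicDigit p w (k+1) = p := by omega
    rw [hmp] at hfinal
    have hzero : ((p:ℕ) : ℤ_[p]) ^ (k+2) = 0 := by
      rw [pow_succ']
      linear_combination hfinal
    exact pow_ne_zero _ (Nat.cast_ne_zero.mpr (by omega)) hzero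
  -- hence c * a is a single digit
  have hsingle : ∀ (a : ℕ), a < p → ∃ e : ℕ, e < p ∧ c * ((a:ℕ) : ℤ_[p]) = ((e:ℕ) : ℤ_[p]) := by
    intro a ha
    exact ⟨padicDigit p (c * ((a:ℕ) : ℤ_[p])) 0, aux_digit_lt _ _,
      aux_eq_digit_zero _ (hdig a ha)⟩
  obtain ⟨d, hdlt, hcd⟩ := hsingle 1 hp2
  rw [Nat.cast_one, mul_one] at hcd
  have hd0 : d ≠ 0 := by
    intro h0
    rw [h0] at hcd
    rw [hcd] at hu
    simp at hu
  obtain ⟨e, helt, hce⟩ := hsingle (p-1) (by omega)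
  rw [hcd] at hce
  have hnatmul : ((d * (p-1) : ℕ) : ℤ_[p]) = ((e:ℕ) : ℤ_[p]) := by
    push_cast
    linear_combination hce
  have hde : d * (p - 1) = e := Nat.cast_injective hnatmul
  have hd1 : d = 1 := by
    by_contra hd1
    have hd2 : 2 ≤ d := by omega
    have : 2 * (p-1) ≤ d * (p-1) := Nat.mul_le_mul_right _ hd2
    omega
  intro x
  rw [hc x, hcd, hd1]
  simp
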